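/- The polynomial χ(t) = t⁶ + t⁵ − 2t³ + t + 1 is reciprocal (t⁶χ(1/t) = χ(t)), irreducible over ℚ, has exactly two roots on the unit circle, two roots of modulus > 1 (a non-real complex conjugate pair), and two roots of modulus < 1. -/

import Mathlib

open Polynomial

open Complex in
private lemma cubic_root_exists : ∃ s : ℝ, s^3 + s^2 - 3*s - 4 = 0 ∧ 9/5 < s ∧ s < 2 := by
  have hc : ContinuousOn (fun x : ℝ => x^3 + x^2 - 3*x - 4) (Set.Icc (9/5) 2) := by fun_prop
  have h := intermediate_value_Icc (by norm_num : (9/5:ℝ) ≤ 2) hc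
  have h0 : (0:ℝ) ∈ Set.Icc ((fun x : ℝ => x^3 + x^2 - 3*x - 4) (9/5))
      ((fun x : ℝ => x^3 + x^2 - 3*x - 4) 2) := by norm_num
  obtain ⟨s, hsm, hseq⟩ := h h0
  refine ⟨s, hseq, ?_, ?_⟩
  · rcases lt_or_eq_of_le hsm.1 with h' | h'
    · exact h'
    · exfalso; rw [← h'] at hseq; norm_num at hseq
  · rcases lt_or_eq_of_le hsm.2 with h' | h'
    · exact h'
    · exfalso; rw [h'] at hseq; norm_num at hseq

private lemma cubic_has_real_root (p q r : ℝ) : ∃ x : ℝ, x^3 + p*x^2 + q*x + r = 0 := by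
  set M : ℝ := 1 + |p| + |q| + |r| with hM
  have hM1 : 1 ≤ M := by nlinarith [abs_nonneg p, abs_nonneg q, abs_nonneg r]
  have hM0 : 0 ≤ M := by linarith
  have hMM : M ≤ M^2 := by nlinarith
  have hp1 : 0 ≤ (p + |p|) * M^2 := mul_nonneg (by linarith [neg_abs_le p]) (by positivity)
  have hp2 : 0 ≤ (|p| - p) * M^2 := mul_nonneg (by linarith [le_abs_self p]) (by positivity)
  have hq1 : 0 ≤ (q + |q|) * M := mul_nonneg (by linarith [neg_abs_le q]) hM0
  have hq2 : 0 ≤ (|q| - q) * M := mul_nonneg (by linarith [le_abs_self q]) hM0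
  have hq3 : 0 ≤ |q| * (M^2 - M) := mul_nonneg (abs_nonneg q) (by linarith)
  have hr1 : 0 ≤ |r| * (M^2 - 1) := mul_nonneg (abs_nonneg r) (by nlinarith)
  have hfM : 0 ≤ M^3 + p*M^2 + q*M + r := by nlinarith [le_abs_self r, neg_abs_le r]
  have hfm : (-M)^3 + p*(-M)^2 + q*(-M) + r ≤ 0 := by nlinarith [le_abs_self r, neg_abs_le r]
  have hc : ContinuousOn (fun x : ℝ => x^3 + p*x^2 + q*x + r) (Set.Icc (-M) M) := by fun_prop
  have h := intermediate_value_Icc (by linarith : -M ≤ M) hc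
  obtain ⟨x, _, hx⟩ := h ⟨hfm, hfM⟩
  exact ⟨x, hx⟩


set_option maxHeartbeats 1000000 in
theorem stmt_18 :
    (∀ t : ℂ, t ≠ 0 →
      t ^ 6 * ((t⁻¹) ^ 6 + (t⁻¹) ^ 5 - 2 * (t⁻¹) ^ 3 + t⁻¹ + 1) =
        t ^ 6 + t ^ 5 - 2 * t ^ 3 + t + 1) ∧
    Irreducible (X ^ 6 + X ^ 5 - 2 * X ^ 3 + X + 1 : ℚ[X]) ∧
    ∃ α β γ : ℂ, 1 < ‖α‖ ∧ α.im ≠ 0 ∧ ‖β‖ = 1 ∧ β.im ≠ 0 ∧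
      ‖γ‖ < 1 ∧ γ.im ≠ 0 ∧
      ∀ z : ℂ, z ^ 6 + z ^ 5 - 2 * z ^ 3 + z + 1 = 0 ↔
        z ∈ ({α, (starRingEnd ℂ) α, β, (starRingEnd ℂ) β, γ, (starRingEnd ℂ) γ} : Set ℂ) := by
  have part1 : ∀ t : ℂ, t ≠ 0 →
      t ^ 6 * ((t⁻¹) ^ 6 + (t⁻¹) ^ 5 - 2 * (t⁻¹) ^ 3 + t⁻¹ + 1) =
        t ^ 6 + t ^ 5 - 2 * t ^ 3 + t + 1 := by
    intro t ht
    have h1 : t * t⁻¹ = 1 := mul_inv_cancel₀ ht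
    have h2 : t ^ 6 * ((t⁻¹) ^ 6 + (t⁻¹) ^ 5 - 2 * (t⁻¹) ^ 3 + t⁻¹ + 1) =
        (t*t⁻¹)^6 + (t*t⁻¹)^5*t - 2*((t*t⁻¹)^3)*t^3 + (t*t⁻¹)*t^5 + t^6 := by ring
    rw [h2, h1]
    ring
  obtain ⟨s0, hs0, hs0l, hs0u⟩ := cubic_root_exists
  have hDpos : 0 < 3*s0^2 + 2*s0 - 13 := by nlinarith
  set d := Real.sqrt (3*s0^2 + 2*s0 - 13) with hddef
  have hd : d^2 = 3*s0^2 + 2*s0 - 13 := Real.sq_sqrt hDpos.le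
  have hdpos : 0 < d := Real.sqrt_pos.2 hDpos
  have hEpos : 0 < 4 - s0^2 := by nlinarith
  set e := Real.sqrt (4 - s0^2) with hedef
  have he : e^2 = 4 - s0^2 := Real.sq_sqrt hEpos.le
  have hepos : 0 < e := Real.sqrt_pos.2 hEpos
  set s1 : ℂ := ((-(1+s0)/2 : ℝ) : ℂ) + ((d/2 : ℝ) : ℂ) * Complex.I with hs1def
  have hs1im : s1.im = d/2 := by simp [hs1def]
  have hcs1 : (starRingEnd ℂ) s1 = ((-(1+s0)/2 : ℝ) : ℂ) - ((d/2 : ℝ) : ℂ) * Complex.I := by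
    rw [hs1def, map_add, map_mul, Complex.conj_ofReal, Complex.conj_ofReal, Complex.conj_I]; ring
  have hdC : ((d:ℂ))^2 = 3*(s0:ℂ)^2 + 2*(s0:ℂ) - 13 := by exact_mod_cast congrArg Complex.ofReal hd
  have hA : s1 + (starRingEnd ℂ) s1 = -(1+(s0:ℂ)) := by
    rw [hcs1, hs1def]; push_cast; ring
  have hB : s1 * (starRingEnd ℂ) s1 = (s0:ℂ)^2 + (s0:ℂ) - 3 := by
    rw [hcs1, hs1def]; push_cast
    linear_combination ((1:ℂ)/4) * hdC + (-((d:ℂ))^2/4) * Complex.I_sq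
  have hcube : (s0:ℂ)^3 + (s0:ℂ)^2 - 3*(s0:ℂ) - 4 = 0 := by exact_mod_cast congrArg Complex.ofReal hs0
  -- beta
  set β : ℂ := ((s0/2 : ℝ) : ℂ) + ((e/2 : ℝ) : ℂ) * Complex.I with hβdef
  have hcβ : (starRingEnd ℂ) β = ((s0/2 : ℝ) : ℂ) - ((e/2 : ℝ) : ℂ) * Complex.I := by
    rw [hβdef, map_add, map_mul, Complex.conj_ofReal, Complex.conj_ofReal, Complex.conj_I]; ring
  have hβsum : β + (starRingEnd ℂ) β = (s0:ℂ) := by rw [hcβ, hβdef]; push_cast; ring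
  have heC : ((e:ℂ))^2 = 4 - (s0:ℂ)^2 := by exact_mod_cast congrArg Complex.ofReal he
  have hβprod : β * (starRingEnd ℂ) β = 1 := by
    rw [hcβ, hβdef]; push_cast
    linear_combination ((1:ℂ)/4) * heC + (-((e:ℂ))^2/4) * Complex.I_sq
  have hβim : β.im = e/2 := by simp [hβdef]
  have hβabs : ‖β‖ = 1 := by
    have h1 : β * (starRingEnd ℂ) β = ((‖β‖ ^ 2 : ℝ) : ℂ) := by
      rw [Complex.mul_conj, Complex.normSq_eq_norm_sq]
    rw [hβprod] at h1
    have h2 : ‖β‖ ^ 2 = 1 := by exact_mod_cast h1.symm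
    have h3 : (‖β‖ - 1) * (‖β‖ + 1) = 0 := by nlinarith
    rcases mul_eq_zero.mp h3 with h | h
    · linarith
    · nlinarith [norm_nonneg β]
  -- square root of s1^2-4 and roots of z^2 - s1 z + 1
  obtain ⟨w, hw⟩ : ∃ w : ℂ, w^2 = s1^2 - 4 := by
    obtain ⟨w, hw⟩ := IsAlgClosed.exists_root (k := ℂ) (X^2 - C (s1^2-4)) (by
      rw [Polynomial.degree_X_pow_sub_C (by norm_num : 0 < 2)]; norm_num)
    refine ⟨w, ?_⟩
    have := hw
    simp [Polynomial.IsRoot, Polynomial.eval_pow, sub_eq_zero] at this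
    exact this
  have him : ∀ r r' : ℂ, r + r' = s1 → r * r' = 1 → r.im ≠ 0 := by
    intro r r' hsum hprod h0
    have hr0 : r ≠ 0 := by rintro rfl; simp at hprod
    have hre0 : r.re ≠ 0 := by
      intro h; apply hr0; exact Complex.ext h h0
    have hr : r = ((r.re : ℝ) : ℂ) := (Complex.ext (by simp) (by simp [h0])).symm
    rw [hr] at hprod
    have hr' : r' = (((r.re)⁻¹ : ℝ) : ℂ) := by
      rw [Complex.ofReal_inv]; exact eq_inv_of_mul_eq_one_right hprod
    have : s1.im = 0 := by rw [← hsum, hr, hr']; simp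
    rw [hs1im] at this
    linarith
  have habs_ne : ∀ r r' : ℂ, r + r' = s1 → r * r' = 1 → ‖r‖ ≠ 1 := by
    intro r r' hsum hprod h1
    have hr0 : r ≠ 0 := by rintro rfl; simp at hprod
    have hc : r * (starRingEnd ℂ) r = 1 := by
      rw [Complex.mul_conj, Complex.normSq_eq_norm_sq, h1]; norm_num
    have hr' : r' = (starRingEnd ℂ) r := by
      have := hprod.trans hc.symm
      exact mul_left_cancel₀ hr0 this
    have : s1.im = 0 := by rw [← hsum, hr']; simp
    rw [hs1im] at this
    linarith
  obtain ⟨α, α', hsum, hprod, habs⟩ : ∃ a a' : ℂ, a + a' = s1 ∧ a * a' = 1 ∧ 1 < ‖a‖ := by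
    set rp := (s1 + w)/2 with hrp
    set rm := (s1 - w)/2 with hrm
    have hsum : rp + rm = s1 := by rw [hrp, hrm]; ring
    have hprod : rp * rm = 1 := by rw [hrp, hrm]; linear_combination (-(1:ℂ)/4) * hw
    have habsmul : ‖rp‖ * ‖rm‖ = 1 := by
      rw [← norm_mul, hprod, norm_one]
    rcases lt_or_gt_of_ne (habs_ne rp rm hsum hprod) with h | h
    · refine ⟨rm, rp, by rw [← hsum]; ring, by rw [← hprod]; ring, ?_⟩
      nlinarith [norm_nonneg rp, norm_nonneg rm]
    · exact ⟨rp, rm, hsum, hprod, h⟩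
  have hα0 : α ≠ 0 := by
    intro h; rw [h] at habs; simp at habs; linarith
  have hαim : α.im ≠ 0 := him α α' hsum hprod
  have hα'im : α'.im ≠ 0 := him α' α (by rw [← hsum]; ring) (by rw [← hprod]; ring)
  have hα'abs : ‖α'‖ < 1 := by
    have habsmul : ‖α‖ * ‖α'‖ = 1 := by rw [← norm_mul, hprod, norm_one]
    nlinarith [norm_nonneg α']
  set γ : ℂ := (starRingEnd ℂ) α' with hγdef
  have hγabs : ‖γ‖ < 1 := by rwa [hγdef, Complex.norm_conj]
  have hγim : γ.im ≠ 0 := by rw [hγdef]; simpa using hα'im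
  have hcγ : (starRingEnd ℂ) γ = α' := by rw [hγdef, Complex.conj_conj]
  -- quadratic factorizations
  have hq1 : ∀ z : ℂ, z^2 - s1*z + 1 = (z - α)*(z - α') := by
    intro z; linear_combination z*hsum - hprod
  have hsumc : (starRingEnd ℂ) α + (starRingEnd ℂ) α' = (starRingEnd ℂ) s1 := by
    rw [← map_add, hsum]
  have hprodc : (starRingEnd ℂ) α * (starRingEnd ℂ) α' = 1 := by
    rw [← map_mul, hprod, map_one]
  have hq2 : ∀ z : ℂ, z^2 - ((starRingEnd ℂ) s1)*z + 1 = (z - (starRingEnd ℂ) α)*(z - (starRingEnd ℂ) α') := by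
    intro z; linear_combination z*hsumc - hprodc
  have hq3 : ∀ z : ℂ, z^2 - (s0:ℂ)*z + 1 = (z - β)*(z - (starRingEnd ℂ) β) := by
    intro z; linear_combination z*hβsum - hβprod
  have hq12 : ∀ z : ℂ, (z^2 - s1*z + 1)*(z^2 - ((starRingEnd ℂ) s1)*z + 1) =
      z^4 + (1+(s0:ℂ))*z^3 + ((s0:ℂ)^2+(s0:ℂ)-1)*z^2 + (1+(s0:ℂ))*z + 1 := by
    intro z; linear_combination (-z^3 - z)*hA + z^2*hB
  have h5 : ∀ z : ℂ, z^6 + z^5 - 2*z^3 + z + 1 =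
      (z^4 + (1+(s0:ℂ))*z^3 + ((s0:ℂ)^2+(s0:ℂ)-1)*z^2 + (1+(s0:ℂ))*z + 1)*(z^2 - (s0:ℂ)*z + 1) := by
    intro z; linear_combination z^3*hcube
  have key2 : ∀ z : ℂ, z^6 + z^5 - 2*z^3 + z + 1 =
      (z - α)*(z - (starRingEnd ℂ) α)*(z - β)*(z - (starRingEnd ℂ) β)*(z - γ)*(z - (starRingEnd ℂ) γ) := by
    intro z
    rw [h5 z, ← hq12 z, hq1 z, hq2 z, hq3 z, hγdef, Complex.conj_conj]
    ring
  have hroots : ∀ z : ℂ, z^6 + z^5 - 2*z^3 + z + 1 = 0 ↔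
      (z = α ∨ z = (starRingEnd ℂ) α ∨ z = β ∨ z = (starRingEnd ℂ) β ∨ z = γ ∨ z = (starRingEnd ℂ) γ) := by
    intro z
    rw [key2 z]
    simp only [mul_eq_zero, sub_eq_zero, or_assoc]
  have him_all : ∀ z : ℂ, z^6 + z^5 - 2*z^3 + z + 1 = 0 → z.im ≠ 0 := by
    intro z hz
    rcases (hroots z).mp hz with rfl | rfl | rfl | rfl | rfl | rfl
    · exact hαim
    · simpa using hαim
    · rw [hβim]; intro h; linarith
    · simp only [Complex.conj_im, hβim]; intro h; linarith
    · exact hγim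
    · simpa using hγim
  have no_real_root : ∀ x : ℝ, x^6 + x^5 - 2*x^3 + x + 1 ≠ 0 := by
    intro x hx
    have hC : ((x:ℂ))^6 + (x:ℂ)^5 - 2*(x:ℂ)^3 + (x:ℂ) + 1 = 0 := by
      exact_mod_cast congrArg Complex.ofReal hx
    exact him_all _ hC (Complex.ofReal_im x)
  have hs0_irrat : ∀ q : ℚ, s0 ≠ (q : ℝ) := by
    intro q hq
    have hq3 : q^3 + q^2 - 3*q - 4 = 0 := by
      rw [hq] at hs0; exact_mod_cast hs0
    have hmono : (X^3 + X^2 - C 3 * X - C 4 : ℤ[X]).Monic := by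
      have h2 : ((X^2 - C 3 * X - C 4 : ℤ[X])).degree < 3 :=
        lt_of_le_of_lt (by compute_degree : ((X^2 - C 3 * X - C 4 : ℤ[X])).degree ≤ 2) (by decide)
      have := Polynomial.monic_X_pow_add (n := 3) h2
      convert this using 1
      ring
    have hint : IsIntegral ℤ q := by
      refine ⟨X^3 + X^2 - C 3 * X - C 4, hmono, ?_⟩
      simp only [Polynomial.eval₂_sub, Polynomial.eval₂_add, Polynomial.eval₂_mul,
        Polynomial.eval₂_pow, Polynomial.eval₂_X, Polynomial.eval₂_C,
        algebraMap_int_eq, eq_intCast, Int.cast_ofNat, Polynomial.eval₂_ofNat]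
      linear_combination hq3
    obtain ⟨m, hm⟩ := IsIntegrallyClosed.isIntegral_iff.mp hint
    have hmq : (m : ℚ) = q := by exact_mod_cast hm
    have h1 : (9:ℝ)/5 < (m:ℝ) := by
      rw [show ((m:ℝ)) = ((m:ℚ):ℝ) by push_cast; ring, hmq, ← hq]; exact hs0l
    have h2 : ((m:ℝ)) < 2 := by
      rw [show ((m:ℝ)) = ((m:ℚ):ℝ) by push_cast; ring, hmq, ← hq]; exact hs0u
    have hm2 : m < 2 := by exact_mod_cast h2
    have hm1 : 1 < m := by
      have : (1:ℝ) < (m:ℝ) := by linarith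
      exact_mod_cast this
    omega
  have hα' : α' = α⁻¹ := eq_inv_of_mul_eq_one_right hprod
  have hcα0 : (starRingEnd ℂ) α ≠ 0 := by
    simpa using hα0
  have hexp : -(1+(s0:ℂ)) = α + α⁻¹ + ((starRingEnd ℂ) α + ((starRingEnd ℂ) α)⁻¹) := by
    rw [← hA, ← hsum, hα']
    rw [map_add, map_inv₀]
  have hγval : γ = ((starRingEnd ℂ) α)⁻¹ := by rw [hγdef, hα', map_inv₀]
  have hF : ∀ z : ℂ, z^6 + z^5 - 2*z^3 + z + 1 = 0 →
      ((z + (starRingEnd ℂ) z)*(z*(starRingEnd ℂ) z) + (z + (starRingEnd ℂ) z) = 2*(s0:ℂ)*(z*(starRingEnd ℂ) z) ∨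
       (z + (starRingEnd ℂ) z)*(z*(starRingEnd ℂ) z) + (z + (starRingEnd ℂ) z) = -(1+(s0:ℂ))*(z*(starRingEnd ℂ) z)) := by
    intro z hz
    rcases (hroots z).mp hz with rfl | rfl | rfl | rfl | rfl | rfl
    · right; rw [hexp]; field_simp; ring
    · right; rw [Complex.conj_conj, hexp]; field_simp; ring
    · left; linear_combination ((starRingEnd ℂ) β * β + 1) * hβsum - (s0:ℂ) * hβprod
    · left; rw [Complex.conj_conj]
      linear_combination ((starRingEnd ℂ) β * β + 1) * hβsum - (s0:ℂ) * hβprod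
    · right; rw [hcγ, hα', hγval, hexp]; field_simp; ring
    · right; rw [hcγ, hα', map_inv₀, hexp]; field_simp; ring
  have hχdeg : (X^6+X^5-2*X^3+X+1 : ℚ[X]).natDegree = 6 := by compute_degree!
  have hχ0 : (X^6+X^5-2*X^3+X+1 : ℚ[X]) ≠ 0 := by
    intro h; rw [h] at hχdeg; simp at hχdeg
  have hfactor : ∀ f g : ℚ[X], (X^6+X^5-2*X^3+X+1 : ℚ[X]) = f * g →
      (f.natDegree = 1 ∨ f.natDegree = 2 ∨ f.natDegree = 3) → False := by
    intro f g hfg hdeg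
    have hf0 : f ≠ 0 := by rintro rfl; rw [zero_mul] at hfg; exact hχ0 hfg
    have hlc : f.coeff f.natDegree ≠ 0 := by
      rw [← Polynomial.leadingCoeff]; exact Polynomial.leadingCoeff_ne_zero.mpr hf0
    have hroot_f : ∀ x : ℂ, Polynomial.aeval x f = 0 → x^6+x^5-2*x^3+x+1 = 0 := by
      intro x hx
      have h1 : Polynomial.aeval x (X^6+X^5-2*X^3+X+1 : ℚ[X]) = 0 := by
        rw [hfg, map_mul, hx, zero_mul]
      simpa [map_ofNat] using h1
    have hroot_fR : ∀ x : ℝ, Polynomial.aeval x f = 0 → False := by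
      intro x hx
      have h1 : Polynomial.aeval x (X^6+X^5-2*X^3+X+1 : ℚ[X]) = 0 := by
        rw [hfg, map_mul, hx, zero_mul]
      have h2 : x^6+x^5-2*x^3+x+1 = 0 := by simpa [map_ofNat] using h1
      exact no_real_root x h2
    rcases hdeg with h1 | h2 | h3
    · -- degree 1
      have hc1 : (f.coeff 1 : ℝ) ≠ 0 := by
        rw [← h1]; exact_mod_cast hlc
      apply hroot_fR (-(f.coeff 0 : ℝ) / (f.coeff 1 : ℝ))
      rw [Polynomial.aeval_eq_sum_range' (show f.natDegree < 2 by omega)]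
      simp only [Finset.sum_range_succ, Finset.sum_range_zero, Algebra.smul_def, eq_ratCast,
        zero_add, pow_zero, pow_one, mul_one]
      field_simp
      ring
    · -- degree 2 : the main case
      have hc2 : f.coeff 2 ≠ 0 := by rw [← h2]; exact hlc
      have hdeg2 : (f.map (algebraMap ℚ ℂ)).degree ≠ 0 := by
        rw [Polynomial.degree_map, Polynomial.degree_eq_natDegree hf0, h2]
        decide
      obtain ⟨x, hx⟩ := IsAlgClosed.exists_root (k := ℂ) (f.map (algebraMap ℚ ℂ)) hdeg2
      have hx' : Polynomial.aeval x f = 0 := by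
        rwa [Polynomial.aeval_def, ← Polynomial.eval_map]
      have hxc : Polynomial.aeval ((starRingEnd ℂ) x) f = 0 := by
        rw [show ((starRingEnd ℂ) x) = ((starRingEnd ℂ).toRatAlgHom x) from rfl,
          Polynomial.aeval_algHom_apply, hx', map_zero]
      have hx6 := hroot_f x hx'
      have hxim := him_all x hx6
      have hne : x - (starRingEnd ℂ) x ≠ 0 := by
        rw [sub_ne_zero]
        intro h
        exact hxim (Complex.conj_eq_iff_im.mp h.symm)
      have hx0 : x ≠ 0 := by rintro rfl; simp at hxim
      have hev : ∀ y : ℂ, Polynomial.aeval y f =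
          ((f.coeff 0 : ℚ):ℂ) + ((f.coeff 1 : ℚ):ℂ)*y + ((f.coeff 2 : ℚ):ℂ)*y^2 := by
        intro y
        rw [Polynomial.aeval_eq_sum_range' (show f.natDegree < 3 by omega)]
        simp only [Finset.sum_range_succ, Finset.sum_range_zero, Algebra.smul_def, eq_ratCast,
          zero_add, pow_zero, pow_one, mul_one]
      have e1 := hx'
      rw [hev] at e1
      have e2 := hxc
      rw [hev] at e2
      have hlin : ((f.coeff 1 : ℚ):ℂ) + ((f.coeff 2 : ℚ):ℂ)*(x + (starRingEnd ℂ) x) = 0 := by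
        have h12 : (x - (starRingEnd ℂ) x) *
            (((f.coeff 1 : ℚ):ℂ) + ((f.coeff 2 : ℚ):ℂ)*(x + (starRingEnd ℂ) x)) = 0 := by
          linear_combination e1 - e2
        rcases mul_eq_zero.mp h12 with h | h
        · exact absurd h hne
        · exact h
      have hprodN : ((f.coeff 2 : ℚ):ℂ) * (x * (starRingEnd ℂ) x) = ((f.coeff 0 : ℚ):ℂ) := by
        linear_combination x*hlin - e1
      have hc2C : ((f.coeff 2 : ℚ):ℂ) ≠ 0 := by exact_mod_cast hc2
      set t : ℚ := -(f.coeff 1)/(f.coeff 2) with htdef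
      set n : ℚ := (f.coeff 0)/(f.coeff 2) with hndef
      have hT : x + (starRingEnd ℂ) x = ((t:ℚ):ℂ) := by
        rw [htdef]; push_cast; rw [eq_div_iff hc2C]; linear_combination hlin
      have hN : x * (starRingEnd ℂ) x = ((n:ℚ):ℂ) := by
        rw [hndef]; push_cast; rw [eq_div_iff hc2C]; linear_combination hprodN
      have hn0 : n ≠ 0 := by
        intro h
        rw [h] at hN
        push_cast at hN
        rcases mul_eq_zero.mp hN with h' | h'
        · exact hx0 h'
        · exact hx0 (by simpa using h')
      have hnC : ((n:ℚ):ℂ) ≠ 0 := by exact_mod_cast hn0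
      rcases hF x hx6 with hcase | hcase
      · rw [hT, hN] at hcase
        apply hs0_irrat ((t*n+t)/(2*n))
        apply Complex.ofReal_inj.mp
        have hval : (s0:ℂ) = (((t*n+t)/(2*n) : ℚ):ℂ) := by
          push_cast
          field_simp
          linear_combination -hcase
        rw [hval]
        norm_cast
      · rw [hT, hN] at hcase
        apply hs0_irrat (-((t*n+t+n)/n))
        apply Complex.ofReal_inj.mp
        have hval : (s0:ℂ) = ((-((t*n+t+n)/n) : ℚ):ℂ) := by
          push_cast
          field_simp
          linear_combination hcase
        rw [hval]
        norm_cast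
    · -- degree 3
      have hc3 : (f.coeff 3 : ℝ) ≠ 0 := by
        rw [← h3]; exact_mod_cast hlc
      obtain ⟨x, hx⟩ := cubic_has_real_root ((f.coeff 2 : ℝ)/(f.coeff 3 : ℝ))
        ((f.coeff 1 : ℝ)/(f.coeff 3 : ℝ)) ((f.coeff 0 : ℝ)/(f.coeff 3 : ℝ))
      apply hroot_fR x
      rw [Polynomial.aeval_eq_sum_range' (show f.natDegree < 4 by omega)]
      simp only [Finset.sum_range_succ, Finset.sum_range_zero, Algebra.smul_def, eq_ratCast,
        zero_add, pow_zero, pow_one, mul_one]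
      have := hx
      field_simp at this
      linear_combination this
  have hirr : Irreducible (X^6+X^5-2*X^3+X+1 : ℚ[X]) := by
    constructor
    · intro hu
      have h := Polynomial.natDegree_eq_zero_of_isUnit hu
      rw [hχdeg] at h; exact absurd h (by norm_num)
    · intro a b hab
      by_contra hcon
      push_neg at hcon
      obtain ⟨hua, hub⟩ := hcon
      have ha0 : a ≠ 0 := by rintro rfl; rw [zero_mul] at hab; exact hχ0 hab
      have hb0 : b ≠ 0 := by rintro rfl; rw [mul_zero] at hab; exact hχ0 hab
      have hna : a.natDegree ≠ 0 := by
        intro h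
        obtain ⟨c, rfl⟩ := Polynomial.natDegree_eq_zero.mp h
        have hc : c ≠ 0 := by rintro rfl; simp at ha0
        exact hua (Polynomial.isUnit_C.mpr (isUnit_iff_ne_zero.mpr hc))
      have hnb : b.natDegree ≠ 0 := by
        intro h
        obtain ⟨c, rfl⟩ := Polynomial.natDegree_eq_zero.mp h
        have hc : c ≠ 0 := by rintro rfl; simp at hb0
        exact hub (Polynomial.isUnit_C.mpr (isUnit_iff_ne_zero.mpr hc))
      have hsum6 : a.natDegree + b.natDegree = 6 := by
        have h := Polynomial.natDegree_mul ha0 hb0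
        rw [← hab, hχdeg] at h; omega
      rcases le_or_gt a.natDegree 3 with h | h
      · exact hfactor a b hab (by omega)
      · exact hfactor b a (by rw [hab]; ring) (by omega)
  have hβim0 : β.im ≠ 0 := by rw [hβim]; intro h; linarith
  refine ⟨part1, hirr, α, β, γ, habs, hαim, hβabs, hβim0, hγabs, hγim, ?_⟩
  intro z
  simp only [Set.mem_insert_iff, Set.mem_singleton_iff]
  exact hroots z
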